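/- arXiv:math/0104137 — 2 statements merged into one kernel-verified Lean document; each statement's English description precedes it below -/
import Mathlib

section
/- The best constant in condition (c-2) for the classical Bell numbers is 2: if c > 0 is a real number satisfying b_2(n+m) ≤ c^{n+m}·b_2(n)·b_2(m) for all n, m ≥ 0, then c ≥ 2; and c = 2 does satisfy these inequalities. -/
open Real Filter
open scoped Nat

lemma pow_le_factorial_mul_exp (n k : ℕ) : (k:ℝ)^n ≤ n ! * Real.exp k := by
  have h := Real.pow_div_factorial_le_exp (x := (k:ℝ)) (Nat.cast_nonneg k) n
  have hn : (0:ℝ) < n ! := by positivity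
  calc (k:ℝ)^n = ((k:ℝ)^n / n !) * n ! := by field_simp
  _ ≤ Real.exp k * n ! := mul_le_mul_of_nonneg_right h hn.le
  _ = n ! * Real.exp k := by ring

lemma summable_aux (n : ℕ) (r : ℝ) (hr : 0 ≤ r) :
    Summable (fun k : ℕ => (k:ℝ)^n * r^k / k !) := by
  have hbig : Summable (fun k : ℕ => (n ! : ℝ) * ((Real.exp 1 * r)^k / k !)) :=
    (Real.summable_pow_div_factorial _).mul_left _
  refine hbig.of_nonneg_of_le (fun k => by positivity) (fun k => ?_)
  have h1 : (k:ℝ)^n ≤ n ! * Real.exp k := pow_le_factorial_mul_exp n k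
  have h2 : Real.exp k = (Real.exp 1)^k := by rw [← Real.exp_nat_mul]; simp
  have hk : (0:ℝ) < k ! := by positivity
  rw [div_le_iff₀ hk, mul_pow]
  calc (k:ℝ)^n * r^k ≤ (n ! * (Real.exp 1)^k) * r^k :=
        mul_le_mul_of_nonneg_right (h2 ▸ h1) (by positivity)
  _ = n ! * ((Real.exp 1)^k * r^k / k !) * k ! := by field_simp

/-- The classical Bell numbers: `bellTwo n = B₂(n) / e`, where `B₂(n)` is the `n`-th
derivative of `exp (exp x)` at `x = 0`; equivalently
`exp (exp x - 1) = ∑ n, bellTwo n * x ^ n / n !`. -/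
noncomputable def bellTwo (n : ℕ) : ℝ :=
  iteratedDeriv n (fun x : ℝ => Real.exp (Real.exp x)) 0 / Real.exp 1

lemma summable_exp_term (n : ℕ) (x : ℝ) :
    Summable (fun k : ℕ => (k:ℝ)^n * Real.exp (k*x) / k !) := by
  have : (fun k : ℕ => (k:ℝ)^n * Real.exp (k*x) / k !)
      = fun k : ℕ => (k:ℝ)^n * (Real.exp x)^k / k ! := by
    funext k; rw [← Real.exp_nat_mul, mul_comm (k:ℝ) x]
  rw [this]
  exact summable_aux n (Real.exp x) (Real.exp_pos x).le

lemma iteratedDeriv_expexp (n : ℕ) :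
    ∀ x ∈ Set.Ioo (-1:ℝ) 1,
      iteratedDeriv n (fun x : ℝ => Real.exp (Real.exp x)) x
        = ∑' k : ℕ, (k:ℝ)^n * Real.exp (k*x) / k ! := by
  induction n with
  | zero =>
    intro x _
    rw [iteratedDeriv_zero]
    have h := congrFun (Real.exp_eq_exp_ℝ) (Real.exp x)
    rw [h, NormedSpace.exp_eq_tsum_div]
    apply tsum_congr
    intro k
    rw [← Real.exp_nat_mul, mul_comm (k:ℝ) x]
    simp
  | succ n ih =>
    intro x hx
    rw [iteratedDeriv_succ]
    have hEv : iteratedDeriv n (fun x : ℝ => Real.exp (Real.exp x))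
        =ᶠ[nhds x] (fun y => ∑' k : ℕ, (k:ℝ)^n * Real.exp (k*y) / k !) := by
      filter_upwards [isOpen_Ioo.mem_nhds hx] with y hy
      exact ih y hy
    rw [hEv.deriv_eq]
    have hD : HasDerivAt (fun y => ∑' k : ℕ, (k:ℝ)^n * Real.exp (k*y) / k !)
        (∑' k : ℕ, (k:ℝ)^(n+1) * Real.exp (k*x) / k !) x := by
      apply hasDerivAt_tsum_of_isPreconnected
        (u := fun k : ℕ => (k:ℝ)^(n+1) * (Real.exp 1)^k / k !)
        (summable_aux (n+1) (Real.exp 1) (Real.exp_pos 1).le)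
        isOpen_Ioo isPreconnected_Ioo
        (g' := fun k y => (k:ℝ)^(n+1) * Real.exp (k*y) / k !)
        (y₀ := 0) ?_ ?_ ?_ ?_ hx
      · intro k y _
        have h1 : HasDerivAt (fun y : ℝ => Real.exp (k*y)) ((k:ℝ) * Real.exp (k*y)) y := by
          simpa [mul_comm] using ((hasDerivAt_id y).const_mul (k:ℝ)).exp
        have := (h1.const_mul ((k:ℝ)^n)).div_const (k ! : ℝ)
        exact this.congr_deriv (by ring)
      · intro k y hy
        have h1 : Real.exp (k*y) ≤ (Real.exp 1)^k := by
          rw [← Real.exp_nat_mul]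
          exact Real.exp_le_exp.2 (by nlinarith [hy.2, Nat.cast_nonneg (α := ℝ) k])
        have : (0:ℝ) ≤ (k:ℝ)^(n+1) / k ! := by positivity
        rw [Real.norm_eq_abs, abs_of_nonneg (by positivity)]
        calc (k:ℝ)^(n+1) * Real.exp (k*y) / k !
            ≤ (k:ℝ)^(n+1) * (Real.exp 1)^k / k ! := by
              apply div_le_div_of_nonneg_right ?_ (by positivity)
              · exact mul_le_mul_of_nonneg_left h1 (by positivity)
        _ = (k:ℝ)^(n+1) * (Real.exp 1)^k / k ! := rfl
      · exact ⟨by norm_num, by norm_num⟩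
      · exact summable_exp_term n 0
    exact hD.deriv

lemma bellTwo_eq_tsum (n : ℕ) :
    bellTwo n = (∑' k : ℕ, (k:ℝ)^n / k !) / Real.exp 1 := by
  have h := iteratedDeriv_expexp n 0 ⟨by norm_num, by norm_num⟩
  rw [bellTwo, h]
  congr 1
  apply tsum_congr
  intro k
  simp

lemma summable_pow_div_fact (n : ℕ) : Summable (fun k : ℕ => (k:ℝ)^n / k !) := by
  have := summable_aux n 1 zero_le_one
  simpa using this

lemma tsum_pow_div_fact_pos (n : ℕ) : 0 < ∑' k : ℕ, (k:ℝ)^n / k ! := by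
  apply Summable.tsum_pos (summable_pow_div_fact n) (fun k => by positivity) 1
  norm_num

lemma bellTwo_pos (n : ℕ) : 0 < bellTwo n := by
  rw [bellTwo_eq_tsum]
  exact div_pos (tsum_pow_div_fact_pos n) (Real.exp_pos 1)

lemma bellTwo_zero : bellTwo 0 = 1 := by
  rw [bellTwo_eq_tsum]
  have h := congrFun (Real.exp_eq_exp_ℝ) (1:ℝ)
  rw [NormedSpace.exp_eq_tsum_div] at h
  have : ∑' k : ℕ, (k:ℝ)^0 / k ! = Real.exp 1 := by
    rw [h]
    exact tsum_congr fun k => by simp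
  rw [this, div_self (Real.exp_ne_zero 1)]

lemma bellTwo_rec (n : ℕ) :
    bellTwo (n+1) = ∑ i ∈ Finset.range (n+1), (n.choose i : ℝ) * bellTwo i := by
  have key : (∑' k : ℕ, (k:ℝ)^(n+1) / k !)
      = ∑ i ∈ Finset.range (n+1), (n.choose i : ℝ) * ∑' k : ℕ, (k:ℝ)^i / k ! := by
    rw [Summable.tsum_eq_zero_add (summable_pow_div_fact (n+1))]
    have h1 : ∀ k : ℕ, ((k:ℝ)+1)^(n+1) / (k+1)! = ((k:ℝ)+1)^n / k ! := by
      intro k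
      have hk : ((k:ℝ)+1) ≠ 0 := by positivity
      have hf : ((k !:ℝ)) ≠ 0 := by positivity
      rw [Nat.factorial_succ]
      push_cast
      field_simp
      ring
    have h2 : ∀ k : ℕ, ((k:ℝ)+1)^n / k !
        = ∑ i ∈ Finset.range (n+1), (n.choose i : ℝ) * ((k:ℝ)^i / k !) := by
      intro k
      rw [add_pow]
      rw [Finset.sum_div]
      apply Finset.sum_congr rfl
      intro i _
      rw [one_pow]
      ring
    simp only [Nat.cast_add, Nat.cast_one] at *
    rw [show ((0:ℕ):ℝ)^(n+1) / (0:ℕ)! = 0 by simp, zero_add]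
    calc ∑' k : ℕ, ((k:ℝ)+1)^(n+1) / (k+1)!
        = ∑' k : ℕ, ∑ i ∈ Finset.range (n+1), (n.choose i : ℝ) * ((k:ℝ)^i / k !) := by
          apply tsum_congr
          intro k
          rw [← h2 k, ← h1 k]
      _ = ∑ i ∈ Finset.range (n+1), ∑' k : ℕ, (n.choose i : ℝ) * ((k:ℝ)^i / k !) := by
          apply Summable.tsum_finsetSum
          intro i _
          exact (summable_pow_div_fact i).mul_left _
      _ = ∑ i ∈ Finset.range (n+1), (n.choose i : ℝ) * ∑' k : ℕ, (k:ℝ)^i / k ! := by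
          apply Finset.sum_congr rfl
          intro i _
          rw [tsum_mul_left]
  rw [bellTwo_eq_tsum, key, Finset.sum_div]
  apply Finset.sum_congr rfl
  intro i _
  rw [bellTwo_eq_tsum]
  ring

lemma bellTwo_ge_one (n : ℕ) : 1 ≤ bellTwo n := by
  induction n with
  | zero => rw [bellTwo_zero]
  | succ n ih =>
    rw [bellTwo_rec]
    calc (1:ℝ) ≤ bellTwo n := ih
      _ = (n.choose n : ℝ) * bellTwo n := by simp
      _ ≤ ∑ i ∈ Finset.range (n+1), (n.choose i : ℝ) * bellTwo i := by
          apply Finset.single_le_sum (f := fun i => (n.choose i : ℝ) * bellTwo i)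
            (fun i _ => mul_nonneg (Nat.cast_nonneg _) (bellTwo_pos i).le)
          simp

noncomputable def beta (n : ℕ) : ℝ := bellTwo n / n !

lemma beta_pos (n : ℕ) : 0 < beta n := div_pos (bellTwo_pos n) (by positivity)

lemma one_div_factorial_le_beta (n : ℕ) : 1 / (n ! : ℝ) ≤ beta n :=
  div_le_div_of_nonneg_right (bellTwo_ge_one n) (by positivity) |>.trans_eq rfl

lemma beta_rec (n : ℕ) :
    ((n:ℝ)+1) * beta (n+1) = ∑ k ∈ Finset.range (n+1), beta k / (n-k)! := by
  have h := bellTwo_rec n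
  have h2 : ((n:ℝ)+1) * beta (n+1) = bellTwo (n+1) / n ! := by
    rw [beta, Nat.factorial_succ]
    push_cast
    field_simp
  rw [h2, h, Finset.sum_div]
  apply Finset.sum_congr rfl
  intro k hk
  rw [Finset.mem_range, Nat.lt_succ_iff] at hk
  rw [beta]
  have hch : (n.choose k : ℝ) = n ! / (k ! * (n-k)!) := by
    rw [Nat.choose_eq_factorial_div_factorial hk]
    rw [Nat.cast_div]
    · push_cast; ring
    · exact Nat.factorial_mul_factorial_dvd_factorial hk
    · positivity
  rw [hch]
  have h1 : (n ! : ℝ) ≠ 0 := by positivity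
  have h2 : (k ! : ℝ) ≠ 0 := by positivity
  have h3 : (((n-k) !) : ℝ) ≠ 0 := by positivity
  field_simp

lemma beta_zero : beta 0 = 1 := by simp [beta, bellTwo_zero]

lemma beta_submul : ∀ N n m, n + m = N → beta (n + m) ≤ beta n * beta m := by
  intro N
  induction N using Nat.strong_induction_on with
  | _ N IH =>
    intro n m hN
    match m with
    | 0 => simp [beta_zero]
    | (m'+1) =>
      match n with
      | 0 => simp [beta_zero]
      | (n'+1) =>
        set n := n'+1 with hn
        set m := m'+1 with hm
        have hrec := beta_rec (n+m')
        have hsplit : ∑ k ∈ Finset.range (n+m'+1), beta k / (n+m'-k)!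
            = (∑ k ∈ Finset.range n, beta k / (n+m'-k)!)
              + ∑ j ∈ Finset.range (m'+1), beta (n+j) / (n+m'-(n+j))! := by
          rw [← Finset.sum_range_add]
          rfl
        have hS2 : ∑ j ∈ Finset.range (m'+1), beta (n+j) / (n+m'-(n+j))!
            ≤ beta n * (((m':ℝ)+1) * beta m) := by
          have hterm : ∀ j ∈ Finset.range (m'+1), beta (n+j) / (n+m'-(n+j))!
              ≤ beta n * (beta j / (m'-j)!) := by
            intro j hj
            rw [Finset.mem_range, Nat.lt_succ_iff] at hj
            have hidx : n+m'-(n+j) = m'-j := by omega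
            rw [hidx, ← mul_div_assoc]
            apply div_le_div_of_nonneg_right ?_ (by positivity)
            exact IH (n+j) (by omega) n j rfl
          calc ∑ j ∈ Finset.range (m'+1), beta (n+j) / (n+m'-(n+j))!
              ≤ ∑ j ∈ Finset.range (m'+1), beta n * (beta j / (m'-j)!) :=
                Finset.sum_le_sum hterm
            _ = beta n * ∑ j ∈ Finset.range (m'+1), beta j / (m'-j)! := by
                rw [Finset.mul_sum]
            _ = beta n * (((m':ℝ)+1) * beta m) := by rw [beta_rec m']
        have hS1 : ∑ k ∈ Finset.range n, beta k / (n+m'-k)!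
            ≤ beta m * (((n':ℝ)+1) * beta n) := by
          have hterm : ∀ k ∈ Finset.range n, beta k / (n+m'-k)!
              ≤ beta m * (beta k / (n'-k)!) := by
            intro k hk
            rw [Finset.mem_range, hn, Nat.lt_succ_iff] at hk
            have hidx : n+m'-k = (n'-k) + (m'+1) := by omega
            rw [hidx]
            have hfac : ((n'-k)! : ℝ) * (m'+1)! ≤ (((n'-k) + (m'+1))! : ℝ) := by
              exact_mod_cast Nat.cast_le.mpr
                (Nat.le_of_dvd (Nat.factorial_pos _)
                  (Nat.factorial_mul_factorial_dvd_factorial_add _ _))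
            have h1 : beta k / (((n'-k) + (m'+1))! : ℝ)
                ≤ beta k / (((n'-k)! : ℝ) * (m'+1)!) := by
              apply div_le_div_of_nonneg_left (beta_pos k).le ?_ hfac
              positivity
            refine h1.trans ?_
            rw [div_le_iff₀ (by positivity)]
            have h2 := one_div_factorial_le_beta m
            calc beta k = beta k * ((m ! : ℝ) * (1 / (m ! : ℝ))) := by
                  field_simp
              _ ≤ beta k * ((m ! : ℝ) * beta m) := by
                  apply mul_le_mul_of_nonneg_left ?_ (beta_pos k).le
                  exact mul_le_mul_of_nonneg_left h2 (by positivity)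
              _ = beta m * (beta k / (n'-k)!) * (((n'-k)! : ℝ) * (m'+1)!) := by
                  rw [hm]
                  field_simp
          calc ∑ k ∈ Finset.range n, beta k / (n+m'-k)!
              ≤ ∑ k ∈ Finset.range n, beta m * (beta k / (n'-k)!) :=
                Finset.sum_le_sum hterm
            _ = beta m * ∑ k ∈ Finset.range (n'+1), beta k / (n'-k)! := by
                rw [Finset.mul_sum]
            _ = beta m * (((n':ℝ)+1) * beta n) := by rw [beta_rec n']
        have htot : ((n:ℝ)+m'+1) * beta (n+m) ≤ ((n:ℝ)+m'+1) * (beta n * beta m) := by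
          have e1 : ((n:ℝ)+m'+1) * beta (n+m) = ∑ k ∈ Finset.range (n+m'+1), beta k / (n+m'-k)! := by
            rw [← hrec, hm]
            push_cast
            ring_nf
          rw [e1, hsplit]
          calc (∑ k ∈ Finset.range n, beta k / (n+m'-k)!)
                + ∑ j ∈ Finset.range (m'+1), beta (n+j) / (n+m'-(n+j))!
              ≤ beta m * (((n':ℝ)+1) * beta n) + beta n * (((m':ℝ)+1) * beta m) :=
                add_le_add hS1 hS2
            _ = ((n:ℝ)+m'+1) * (beta n * beta m) := by
                rw [hn]
                push_cast
                ring
        have hpos : (0:ℝ) < (n:ℝ)+m'+1 := by positivity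
        exact le_of_mul_le_mul_left htot hpos

lemma bellTwo_upper (n m : ℕ) :
    bellTwo (n+m) ≤ 2^(n+m) * (bellTwo n * bellTwo m) := by
  have h := beta_submul (n+m) n m rfl
  rw [beta, beta, beta, div_mul_div_comm, div_le_div_iff₀ (by positivity) (by positivity)] at h
  have hch : ((n+m).choose n : ℝ) * (n ! * m !) = ((n+m)! : ℝ) := by
    rw [← Nat.add_choose_mul_factorial_mul_factorial n m]
    push_cast
    rw [Nat.choose_symm_add]
    ring
  have hch2 : ((n+m).choose n : ℝ) ≤ 2^(n+m) := by
    have : (n+m).choose n ≤ 2^(n+m) := by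
      calc (n+m).choose n ≤ ∑ i ∈ Finset.range (n+m+1), (n+m).choose i :=
            Finset.single_le_sum (f := fun i => (n+m).choose i)
              (fun i _ => Nat.zero_le _) (Finset.mem_range.2 (by omega))
        _ = 2^(n+m) := Nat.sum_range_choose (n+m)
    exact_mod_cast this
  have hfac : (0:ℝ) < (n ! : ℝ) * m ! := by positivity
  rw [← hch] at h
  have h2 : bellTwo (n+m) ≤ ((n+m).choose n : ℝ) * (bellTwo n * bellTwo m) := by
    nlinarith [bellTwo_pos n, bellTwo_pos m, bellTwo_pos (n+m)]
  calc bellTwo (n+m) ≤ ((n+m).choose n : ℝ) * (bellTwo n * bellTwo m) := h2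
    _ ≤ 2^(n+m) * (bellTwo n * bellTwo m) := by
        apply mul_le_mul_of_nonneg_right hch2
        exact mul_nonneg (bellTwo_pos n).le (bellTwo_pos m).le

lemma bellTwo_ge_term (N k : ℕ) : (k:ℝ)^N / k ! / Real.exp 1 ≤ bellTwo N := by
  rw [bellTwo_eq_tsum]
  apply div_le_div_of_nonneg_right ?_ (Real.exp_pos 1).le
  exact Summable.le_tsum (summable_pow_div_fact N) k (fun j _ => by positivity)

lemma bellTwo_le_chernoff (N : ℕ) (t : ℝ) (ht : 0 < t) :
    bellTwo N ≤ (N ! : ℝ) * Real.exp (Real.exp t) / (t^N * Real.exp 1) := by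
  rw [bellTwo_eq_tsum]
  have hterm : ∀ k : ℕ, (k:ℝ)^N / k ! ≤ (N ! : ℝ) / t^N * ((Real.exp t)^k / k !) := by
    intro k
    have h1 : (t*(k:ℝ))^N / N ! ≤ Real.exp (t*k) :=
      Real.pow_div_factorial_le_exp (x := t*(k:ℝ)) (by positivity) N
    have h2 : (k:ℝ)^N ≤ (N ! : ℝ) / t^N * Real.exp (t*k) := by
      rw [div_le_iff₀ (by positivity : (0:ℝ) < (N ! : ℝ)), mul_pow] at h1
      rw [div_mul_eq_mul_div, le_div_iff₀ (by positivity : (0:ℝ) < t^N)]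
      nlinarith [h1]
    have h3 : Real.exp (t*k) = (Real.exp t)^k := by
      rw [← Real.exp_nat_mul]; ring_nf
    calc (k:ℝ)^N / k ! ≤ ((N ! : ℝ) / t^N * Real.exp (t*k)) / k ! := by
          gcongr
      _ = (N ! : ℝ) / t^N * ((Real.exp t)^k / k !) := by rw [h3]; ring
  have hsum2 : Summable (fun k : ℕ => (N ! : ℝ) / t^N * ((Real.exp t)^k / k !)) :=
    (Real.summable_pow_div_factorial _).mul_left _
  have h4 : (∑' k : ℕ, (k:ℝ)^N / k !) ≤ (N ! : ℝ) / t^N * Real.exp (Real.exp t) := by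
    calc (∑' k : ℕ, (k:ℝ)^N / k !) ≤ ∑' k : ℕ, (N ! : ℝ) / t^N * ((Real.exp t)^k / k !) :=
          Summable.tsum_le_tsum hterm (summable_pow_div_fact N) hsum2
      _ = (N ! : ℝ) / t^N * ∑' k : ℕ, ((Real.exp t)^k / k !) := tsum_mul_left
      _ = (N ! : ℝ) / t^N * Real.exp (Real.exp t) := by
          congr 1
          have h := congrFun (Real.exp_eq_exp_ℝ) (Real.exp t)
          rw [h, NormedSpace.exp_eq_tsum_div]
  rw [div_le_div_iff₀ (Real.exp_pos 1) (by positivity)]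
  calc (∑' k : ℕ, (k:ℝ)^N / k !) * (t^N * Real.exp 1)
      ≤ ((N ! : ℝ) / t^N * Real.exp (Real.exp t)) * (t^N * Real.exp 1) := by
        apply mul_le_mul_of_nonneg_right h4 (by positivity)
    _ = (N ! : ℝ) * Real.exp (Real.exp t) * Real.exp 1 := by
        field_simp

lemma log_factorial_le (n : ℕ) :
    Real.log (n !) ≤ ((n:ℝ)+1) * Real.log ((n:ℝ)+1) - n := by
  induction n with
  | zero => simp
  | succ n ih =>
    have hcast : (((n+1)! : ℕ) : ℝ) = ((n:ℝ)+1) * (n ! : ℕ) := by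
      rw [Nat.factorial_succ]; push_cast; ring
    have hpos1 : (0:ℝ) < (n:ℝ)+1 := by positivity
    have hpos2 : (0:ℝ) < ((n !:ℕ):ℝ) := by positivity
    rw [hcast, Real.log_mul hpos1.ne' hpos2.ne']
    have hkey : Real.log ((n:ℝ)+2) - Real.log ((n:ℝ)+1) ≥ 1/((n:ℝ)+2) := by
      have h := Real.log_le_sub_one_of_pos
        (show (0:ℝ) < ((n:ℝ)+1)/((n:ℝ)+2) by positivity)
      rw [Real.log_div hpos1.ne' (by positivity : ((n:ℝ)+2) ≠ 0)] at h
      have : ((n:ℝ)+1)/((n:ℝ)+2) - 1 = -(1/((n:ℝ)+2)) := by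
        field_simp
        norm_num
      rw [this] at h
      linarith
    have hlog1 : (0:ℝ) ≤ Real.log ((n:ℝ)+1) := by
      apply Real.log_nonneg; linarith
    have h2 : (1:ℝ) ≤ ((n:ℝ)+2) * (Real.log ((n:ℝ)+2) - Real.log ((n:ℝ)+1)) := by
      have hh := mul_le_mul_of_nonneg_left hkey (show (0:ℝ) ≤ (n:ℝ)+2 by positivity)
      have : ((n:ℝ)+2) * (1/((n:ℝ)+2)) = 1 := by field_simp
      linarith [hh, this.symm.le, this.le]
    push_cast
    push_cast at ih
    rw [show ((n:ℝ)+1+1) = (n:ℝ)+2 by ring]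
    nlinarith [ih, h2, hlog1]

lemma log_factorial_le' (k : ℕ) : Real.log (k !) ≤ (k:ℝ) * Real.log k := by
  match k with
  | 0 => simp
  | (k'+1) =>
    set k := k'+1
    have h1 : (k ! : ℕ) ≤ k^k := Nat.factorial_le_pow k
    have h2 : Real.log (k !) ≤ Real.log ((k:ℝ)^k) := by
      apply Real.log_le_log (by positivity)
      exact_mod_cast h1
    rw [Real.log_pow] at h2
    exact_mod_cast h2

lemma two_pow_ge (m : ℕ) (hm : 5 ≤ m) : (4*m+5 : ℝ) ≤ 2^m := by
  induction m, hm using Nat.le_induction with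
  | base => norm_num
  | succ m hm ih =>
    have h5 : (5:ℝ) ≤ m := by exact_mod_cast hm
    push_cast
    rw [pow_succ]
    push_cast at ih
    nlinarith [ih]

lemma exp_ge_two_pow (m : ℕ) : (2:ℝ)^m ≤ Real.exp m := by
  have h : Real.exp m = (Real.exp 1)^m := by
    rw [← Real.exp_nat_mul]; ring_nf
  rw [h]
  apply pow_le_pow_left₀ (by norm_num)
  linarith [Real.exp_one_gt_d9]

set_option maxHeartbeats 1000000 in
lemma bellTwo_lower_const (c : ℝ) (hc : 0 < c)
    (H : ∀ n m : ℕ, bellTwo (n + m) ≤ c ^ (n + m) * (bellTwo n * bellTwo m)) :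
    2 ≤ c := by
  have hlog : Real.log 2 ≤ Real.log c := by
    apply le_of_forall_pos_le_add
    intro ε hε
    -- choose parameters
    set m : ℕ := max 7 ⌈3/ε⌉₊ with hm_def
    have hm7 : 7 ≤ m := le_max_left _ _
    have hmε : (3:ℝ) ≤ (m:ℝ) * ε := by
      have h1 : (3/ε : ℝ) ≤ (⌈3/ε⌉₊ : ℝ) := Nat.le_ceil _
      have h2 : (⌈3/ε⌉₊ : ℕ) ≤ m := le_max_right _ _
      have h3 : ((⌈3/ε⌉₊ : ℕ) : ℝ) ≤ (m:ℝ) := by exact_mod_cast h2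
      have := (div_le_iff₀ hε).mp (h1.trans h3)
      linarith
    set E : ℕ := ⌈Real.exp m⌉₊ with hE_def
    have hexpm1 : (1:ℝ) ≤ Real.exp m := Real.one_le_exp (by positivity)
    have hEge : Real.exp m ≤ (E:ℝ) := Nat.le_ceil _
    have hEle : (E:ℝ) ≤ 2 * Real.exp m := by
      have := Nat.ceil_lt_add_one (le_of_lt (Real.exp_pos (m:ℝ)))
      have h2 : (E:ℝ) < Real.exp m + 1 := this
      linarith
    have hE1 : (1:ℝ) ≤ (E:ℝ) := hexpm1.trans hEge
    have hE1' : 1 ≤ E := by exact_mod_cast hE1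
    have hm1 : (1:ℝ) ≤ (m:ℝ) := by
      have : (1:ℕ) ≤ m := by omega
      exact_mod_cast this
    set n : ℕ := m * E with hn_def
    set k : ℕ := 2 * E with hk_def
    have hn1 : (1:ℝ) ≤ (n:ℝ) := by
      have : (1:ℕ) ≤ n := Nat.one_le_iff_ne_zero.2
        (Nat.mul_ne_zero (by omega) (by omega))
      exact_mod_cast this
    have hnpos : (0:ℝ) < (n:ℝ) := by linarith
    have hk1 : (1:ℝ) ≤ (k:ℝ) := by
      have : (1:ℕ) ≤ k := by omega
      exact_mod_cast this
    have hkm : (k:ℝ) * (m:ℝ) = 2 * (n:ℝ) := by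
      rw [hn_def, hk_def]
      push_cast
      ring
    have hkR : (0:ℝ) < (k:ℝ) := lt_of_lt_of_le one_pos hk1
    have hmR : (0:ℝ) < (m:ℝ) := lt_of_lt_of_le one_pos hm1
    have hER : (0:ℝ) < (E:ℝ) := lt_of_lt_of_le one_pos hE1
    have hkfact : (0:ℝ) < ((k ! : ℕ):ℝ) := by exact_mod_cast Nat.factorial_pos k
    have hnfact : (0:ℝ) < ((n ! : ℕ):ℝ) := by exact_mod_cast Nat.factorial_pos n
    -- the three log inequalities
    have hb2n := bellTwo_pos (n+n)
    have hbn := bellTwo_pos n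
    have A1 : Real.log (bellTwo (n+n)) ≤ ((n:ℝ)+n) * Real.log c
        + 2 * Real.log (bellTwo n) := by
      have h := H n n
      have h2 : Real.log (bellTwo (n+n)) ≤ Real.log (c^(n+n) * (bellTwo n * bellTwo n)) :=
        Real.log_le_log hb2n h
      rw [Real.log_mul (pow_ne_zero _ hc.ne') (mul_pos hbn hbn).ne',
        Real.log_mul hbn.ne' hbn.ne', Real.log_pow] at h2
      push_cast at h2
      linarith
    have A2 : ((n:ℝ)+n) * Real.log k - Real.log (k !) - 1 ≤ Real.log (bellTwo (n+n)) := by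
      have h := bellTwo_ge_term (n+n) k
      have hpos : (0:ℝ) < (k:ℝ)^(n+n)/(k !) / Real.exp 1 :=
        div_pos (div_pos (pow_pos hkR _) hkfact) (Real.exp_pos 1)
      have h2 := Real.log_le_log hpos h
      rw [Real.log_div (div_pos (pow_pos hkR _) hkfact).ne' (Real.exp_ne_zero 1),
        Real.log_div (pow_pos hkR _).ne' hkfact.ne',
        Real.log_pow, Real.log_exp] at h2
      push_cast at h2
      linarith
    have A3 : Real.log (bellTwo n) ≤ Real.log (n !) + Real.exp m
        - (n:ℝ) * Real.log m - 1 := by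
      have h := bellTwo_le_chernoff n m hmR
      have h2 := Real.log_le_log hbn h
      rw [Real.log_div (mul_pos hnfact (Real.exp_pos _)).ne'
          (mul_pos (pow_pos hmR n) (Real.exp_pos 1)).ne',
        Real.log_mul hnfact.ne' (Real.exp_ne_zero _),
        Real.log_mul (pow_pos hmR n).ne' (Real.exp_ne_zero 1),
        Real.log_exp, Real.log_exp, Real.log_pow] at h2
      push_cast at h2
      linarith
    -- combine
    have comb : ((n:ℝ)+n) * Real.log k - Real.log (k !) - 1
        ≤ ((n:ℝ)+n) * Real.log c + 2 * (Real.log (n !) + Real.exp m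
          - (n:ℝ) * Real.log m - 1) := by
      have hA3 : 2 * Real.log (bellTwo n) ≤ 2*(Real.log (n !) + Real.exp m
          - (n:ℝ)*Real.log m - 1) := by linarith [A3]
      linarith [A1, A2, hA3]
    -- log k + log m = log 2 + log n
    have hlogkm : Real.log k + Real.log m = Real.log 2 + Real.log n := by
      rw [← Real.log_mul hkR.ne' hmR.ne',
        ← Real.log_mul (by norm_num : (2:ℝ) ≠ 0) hnpos.ne', hkm]
    -- bounds
    have B1 : Real.log (k !) ≤ 2*(E:ℝ) * ((m:ℝ) + Real.log 4) := by
      have h1 := log_factorial_le' k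
      have h2 : Real.log k ≤ (m:ℝ) + Real.log 4 := by
        have hk4 : (k:ℝ) ≤ 4 * Real.exp m := by
          rw [hk_def]; push_cast; linarith
        have := Real.log_le_log hkR hk4
        rw [Real.log_mul (by norm_num) (Real.exp_ne_zero _), Real.log_exp] at this
        linarith
      calc Real.log (k !) ≤ (k:ℝ) * Real.log k := h1
        _ ≤ (k:ℝ) * ((m:ℝ) + Real.log 4) :=
            mul_le_mul_of_nonneg_left h2 hkR.le
        _ = 2*(E:ℝ) * ((m:ℝ) + Real.log 4) := by
            rw [hk_def]; push_cast; ring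
    have B2 : Real.log (n !) ≤ ((n:ℝ)+1) * Real.log ((n:ℝ)+1) - n := log_factorial_le n
    have B3 : Real.log ((n:ℝ)+1) ≤ 2*(m:ℝ)+1 := by
      have hexpm : (2*(m:ℝ)+1) ≤ Real.exp m := by
        calc (2*(m:ℝ)+1) ≤ 4*(m:ℝ)+5 := by linarith
          _ ≤ 2^m := two_pow_ge m (by omega)
          _ ≤ Real.exp m := exp_ge_two_pow m
      have hn2 : (n:ℝ)+1 ≤ Real.exp (2*(m:ℝ)+1) := by
        have e1 : (n:ℝ) + 1 = (m:ℝ)*(E:ℝ) + 1 := by rw [hn_def]; push_cast; ring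
        have e2 : Real.exp (2*(m:ℝ)+1) = Real.exp m * Real.exp m * Real.exp 1 := by
          rw [← Real.exp_add, ← Real.exp_add]; ring_nf
        rw [e1, e2]
        have h3 : (m:ℝ)*(E:ℝ) + 1 ≤ (2*(m:ℝ)+1) * Real.exp m := by
          nlinarith [hEle, Real.exp_pos (m:ℝ)]
        have h4 : (2*(m:ℝ)+1) * Real.exp m ≤ Real.exp m * Real.exp m := by
          nlinarith [hexpm, Real.exp_pos (m:ℝ)]
        have h5 : Real.exp m * Real.exp m ≤ Real.exp m * Real.exp m * Real.exp 1 := by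
          nlinarith [Real.exp_pos (m:ℝ), Real.exp_one_gt_d9,
            mul_pos (Real.exp_pos (m:ℝ)) (Real.exp_pos (m:ℝ))]
        linarith
      calc Real.log ((n:ℝ)+1) ≤ Real.log (Real.exp (2*(m:ℝ)+1)) :=
            Real.log_le_log (by positivity) hn2
        _ = 2*(m:ℝ)+1 := Real.log_exp _
    have B4 : (4*(m:ℝ)+5) ≤ (E:ℝ) := by
      calc (4*(m:ℝ)+5) ≤ 2^m := two_pow_ge m (by omega)
        _ ≤ Real.exp m := exp_ge_two_pow m
        _ ≤ (E:ℝ) := hEge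
    have B5 : (n:ℝ) * Real.log ((n:ℝ)+1) - (n:ℝ) * Real.log n ≤ 1 := by
      have h1 : Real.log ((n:ℝ)+1) - Real.log n ≤ 1/(n:ℝ) := by
        have h := Real.log_le_sub_one_of_pos
          (div_pos (by linarith : (0:ℝ) < (n:ℝ)+1) hnpos)
        rw [Real.log_div (by positivity) hnpos.ne'] at h
        have e : ((n:ℝ)+1)/(n:ℝ) - 1 = 1/(n:ℝ) := by field_simp; ring
        linarith [e ▸ h]
      have h2 := mul_le_mul_of_nonneg_left h1 hnpos.le
      have e2 : (n:ℝ) * (1/(n:ℝ)) = 1 := by field_simp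
      linarith [h2, e2.le, e2.ge]
    have hlog2 : Real.log 2 < 0.6931471808 := Real.log_two_lt_d9
    have hlog4 : Real.log 4 = 2 * Real.log 2 := by
      rw [show (4:ℝ) = 2^2 by norm_num, Real.log_pow]
      push_cast; ring
    -- final arithmetic
    have hne : (n:ℝ) = (m:ℝ) * (E:ℝ) := by rw [hn_def]; push_cast; ring
    have main : 2*(n:ℝ) * Real.log 2 ≤ 2*(n:ℝ) * Real.log c + 2*(n:ℝ) * ε := by
      have c1 : ((n:ℝ)+n) * Real.log k = 2*(n:ℝ)*(Real.log 2 + Real.log n - Real.log m) := by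
        have : Real.log k = Real.log 2 + Real.log n - Real.log m := by linarith [hlogkm]
        rw [this]; ring
      rw [c1] at comb
      -- comb : 2n(log2 + log n − log m) − log k! − 1 ≤ 2n log c + 2 log n! + 2 e^m − 2n log m − 2
      have step : 2*(n:ℝ)*Real.log 2 ≤ 2*(n:ℝ)*Real.log c
          + (2*Real.log (n !) + 2*Real.exp m - 1 - 2*(n:ℝ)*Real.log n + Real.log (k !)) := by
        linarith [comb]
      have extra : 2*Real.log (n !) + 2*Real.exp m - 1 - 2*(n:ℝ)*Real.log n + Real.log (k !)
          ≤ 2*(n:ℝ)*ε := by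
        have t1 : 2*Real.log (n !) ≤ 2*(n:ℝ)*Real.log ((n:ℝ)+1) + 2*Real.log ((n:ℝ)+1) - 2*(n:ℝ) := by
          linarith [B2]
        have t2 : 2*(n:ℝ)*Real.log ((n:ℝ)+1) - 2*(n:ℝ)*Real.log n ≤ 2 := by linarith [B5]
        have t3 : 2*Real.log ((n:ℝ)+1) ≤ 4*(m:ℝ)+2 := by linarith [B3]
        have t4 : Real.log (k !) ≤ 2*(E:ℝ)*(m:ℝ) + 2*(E:ℝ)*Real.log 4 := by linarith [B1]
        have t5 : 2*Real.exp m ≤ 2*(E:ℝ) := by linarith [hEge]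
        -- sum: ≤ 2 + (4m+2) − 2n + 2E + 2Em + 2E log4 − 1 + ... with n = mE
        have t6 : (4*(m:ℝ)+5) + 2*(E:ℝ) + 2*(E:ℝ)*Real.log 4 ≤ 2*(n:ℝ)*ε := by
          have u1 : (4*(m:ℝ)+5) ≤ (E:ℝ) := B4
          have hl4 : Real.log 4 ≤ 7/5 := by rw [hlog4]; linarith
          have u2 : 2*(E:ℝ)*Real.log 4 ≤ 2*(E:ℝ)*(7/5) :=
            mul_le_mul_of_nonneg_left hl4 (by linarith)
          have u4 : 6*(E:ℝ) ≤ 2*(n:ℝ)*ε := by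
            rw [hne]
            have w1 : (3:ℝ)*(E:ℝ) ≤ ((m:ℝ)*ε)*(E:ℝ) :=
              mul_le_mul_of_nonneg_right hmε hER.le
            nlinarith [w1]
          linarith
        linarith [t1, t2, t3, t4, t5, t6, hne]
      linarith
    have := (mul_le_mul_iff_right₀ (show (0:ℝ) < 2*(n:ℝ) by linarith)).mp
      (by linarith [main] : 2*(n:ℝ) * Real.log 2 ≤ 2*(n:ℝ) * (Real.log c + ε))
    linarith
  calc (2:ℝ) = Real.exp (Real.log 2) := (Real.exp_log (by norm_num)).symm
    _ ≤ Real.exp (Real.log c) := Real.exp_le_exp.2 hlog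
    _ = c := Real.exp_log hc

/-- The best constant in condition (c-2) for the classical Bell numbers is `2`:
any `c > 0` with `bellTwo (n+m) ≤ c^(n+m) * bellTwo n * bellTwo m` for all `n, m`
satisfies `c ≥ 2`, and `c = 2` does satisfy these inequalities. -/
theorem bellTwo_best_constant :
    (∀ c : ℝ, 0 < c →
      (∀ n m : ℕ, bellTwo (n + m) ≤ c ^ (n + m) * (bellTwo n * bellTwo m)) → 2 ≤ c) ∧
    (∀ n m : ℕ, bellTwo (n + m) ≤ 2 ^ (n + m) * (bellTwo n * bellTwo m)) :=
  ⟨bellTwo_lower_const, bellTwo_upper⟩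
end

section
/- For every integer k ≥ 2, the sequence Z defined by Z(0) = 1 and Z(n) = exp_k(0)·b_k(n)/(n−1)! = B_k(n)/(n−1)! for n ≥ 1 is log-concave. -/
open scoped Nat

/-- The `k`-times iterated exponential function: `expIter 0 = id`,
`expIter (k+1) x = exp (expIter k x)`. -/
noncomputable def expIter : ℕ → ℝ → ℝ
  | 0 => id
  | k + 1 => fun x => Real.exp (expIter k x)

/-- `BellB k n` is the `n`-th derivative of the `k`-times iterated exponential at `0`,
so that `expIter k x = ∑ n, BellB k n * x ^ n / n !`. -/
noncomputable def BellB (k n : ℕ) : ℝ := iteratedDeriv n (expIter k) 0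

open Finset

lemma contDiff_expIter (k : ℕ) : ContDiff ℝ (⊤ : ℕ∞) (expIter k) := by
  induction k with
  | zero => exact contDiff_id
  | succ k ih => exact Real.contDiff_exp.comp ih

lemma expIter_succ_pos (k : ℕ) (x : ℝ) : 0 < expIter (k+1) x := by
  simp only [expIter]; exact Real.exp_pos _

lemma expIter_zero_nonneg : ∀ k, 0 ≤ expIter k 0 := by
  intro k
  cases k with
  | zero => simp [expIter]
  | succ k => exact (expIter_succ_pos k 0).le

lemma two_le_expIter (k : ℕ) : 2 ≤ expIter (k+2) 0 := by
  have h1 : (1:ℝ) ≤ expIter (k+1) 0 := by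
    simp only [expIter]
    exact Real.one_le_exp (expIter_zero_nonneg k)
  have : (2:ℝ) ≤ Real.exp 1 := by
    have := Real.add_one_le_exp (1:ℝ)
    linarith
  calc (2:ℝ) ≤ Real.exp 1 := this
    _ ≤ Real.exp (expIter (k+1) 0) := Real.exp_le_exp.mpr h1
    _ = expIter (k+2) 0 := by simp [expIter]

lemma deriv_expIter (k : ℕ) :
    deriv (expIter (k+1)) = fun x => deriv (expIter k) x * expIter (k+1) x := by
  funext x
  have hd : HasDerivAt (expIter k) (deriv (expIter k) x) x :=
    (((contDiff_expIter k).differentiable (by simp)) x).hasDerivAt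
  have : HasDerivAt (expIter (k+1)) (Real.exp (expIter k x) * deriv (expIter k) x) x := by
    have := hd.exp
    simpa [expIter] using this
  rw [this.deriv]
  simp [expIter, mul_comm]

lemma bellB_one (n : ℕ) : BellB 1 n = 1 := by
  have he : expIter 1 = Real.exp := by funext x; simp [expIter]
  have h : ∀ m, iteratedDeriv m Real.exp = Real.exp := by
    intro m
    induction m with
    | zero => simp
    | succ m ih => rw [iteratedDeriv_succ, ih, Real.deriv_exp]
  rw [BellB, he, h, Real.exp_zero]


lemma iteratedDeriv_add_apply' {n : ℕ} {F G : ℝ → ℝ} (hF : ContDiff ℝ (⊤ : ℕ∞) F)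
    (hG : ContDiff ℝ (⊤ : ℕ∞) G) (x : ℝ) :
    iteratedDeriv n (fun y => F y + G y) x = iteratedDeriv n F x + iteratedDeriv n G x := by
  have h := iteratedDerivWithin_add (Set.mem_univ x) uniqueDiffOn_univ
    ((hF.of_le (m := (n : WithTop ℕ∞)) (by exact_mod_cast le_top)).contDiffWithinAt (s := Set.univ))
    ((hG.of_le (m := (n : WithTop ℕ∞)) (by exact_mod_cast le_top)).contDiffWithinAt (s := Set.univ)) (n := n)
  simpa [iteratedDerivWithin_univ, Pi.add_def] using h

lemma iteratedDeriv_mul_apply :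
    ∀ (n : ℕ) (f g : ℝ → ℝ), ContDiff ℝ (⊤ : ℕ∞) f → ContDiff ℝ (⊤ : ℕ∞) g → ∀ x : ℝ,
    iteratedDeriv n (fun y => f y * g y) x =
      ∑ i ∈ range (n+1), (n.choose i : ℝ) * iteratedDeriv i f x * iteratedDeriv (n-i) g x := by
  intro n
  induction n with
  | zero => intro f g _ _ x; simp
  | succ n ih =>
    intro f g hf hg x
    have hdf : ContDiff ℝ (⊤ : ℕ∞) (deriv f) := (contDiff_infty_iff_deriv.mp hf).2
    have hdg : ContDiff ℝ (⊤ : ℕ∞) (deriv g) := (contDiff_infty_iff_deriv.mp hg).2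
    have hder : deriv (fun y => f y * g y) = fun y => deriv f y * g y + f y * deriv g y := by
      funext y
      exact deriv_mul ((hf.differentiable (by simp)) y)
        ((hg.differentiable (by simp)) y)
    rw [iteratedDeriv_succ', hder,
      iteratedDeriv_add_apply' (hdf.mul hg) (hf.mul hdg) x,
      ih (deriv f) g hdf hg x, ih f (deriv g) hf hdg x]
    have E1 : ∑ i ∈ range (n+1),
          (n.choose i : ℝ) * iteratedDeriv i (deriv f) x * iteratedDeriv (n-i) g x
        = ∑ i ∈ range (n+1),
          (n.choose i : ℝ) * iteratedDeriv (i+1) f x * iteratedDeriv (n-i) g x := by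
      refine Finset.sum_congr rfl fun i _ => ?_
      rw [← iteratedDeriv_succ']
    have E2 : ∑ i ∈ range (n+1),
          (n.choose i : ℝ) * iteratedDeriv i f x * iteratedDeriv (n-i) (deriv g) x
        = ∑ i ∈ range (n+1),
          (n.choose i : ℝ) * iteratedDeriv i f x * iteratedDeriv (n+1-i) g x := by
      refine Finset.sum_congr rfl fun i hi => ?_
      have hle : i ≤ n := Nat.lt_succ_iff.mp (Finset.mem_range.mp hi)
      have h2 : n+1-i = (n-i)+1 := by omega
      rw [h2, iteratedDeriv_succ']
    have E4 : ∑ i ∈ range (n+1),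
          (n.choose i : ℝ) * iteratedDeriv i f x * iteratedDeriv (n+1-i) g x
        = ∑ i ∈ range (n+1),
            (n.choose (i+1) : ℝ) * iteratedDeriv (i+1) f x * iteratedDeriv (n-i) g x
          + iteratedDeriv 0 f x * iteratedDeriv (n+1) g x := by
      rw [Finset.sum_range_succ'
        (fun i => (n.choose i : ℝ) * iteratedDeriv i f x * iteratedDeriv (n+1-i) g x) n]
      rw [Finset.sum_range_succ
        (fun i => (n.choose (i+1) : ℝ) * iteratedDeriv (i+1) f x * iteratedDeriv (n-i) g x) n]
      simp only [Nat.choose_succ_self, Nat.cast_zero, zero_mul, add_zero, Nat.choose_zero_right,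
        Nat.cast_one, one_mul, Nat.sub_zero]
      congr 1
      refine Finset.sum_congr rfl fun i hi => ?_
      have h3 : n+1-(i+1) = n-i := by omega
      rw [h3]
    have E3 : ∑ i ∈ range (n+1+1),
          ((n+1).choose i : ℝ) * iteratedDeriv i f x * iteratedDeriv (n+1-i) g x
        = ∑ i ∈ range (n+1),
            (n.choose i : ℝ) * iteratedDeriv (i+1) f x * iteratedDeriv (n-i) g x
          + (∑ i ∈ range (n+1),
              (n.choose (i+1) : ℝ) * iteratedDeriv (i+1) f x * iteratedDeriv (n-i) g x
            + iteratedDeriv 0 f x * iteratedDeriv (n+1) g x) := by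
      rw [Finset.sum_range_succ'
        (fun i => ((n+1).choose i : ℝ) * iteratedDeriv i f x * iteratedDeriv (n+1-i) g x) (n+1)]
      have e3 : ∀ i ∈ range (n+1),
          ((n+1).choose (i+1) : ℝ) * iteratedDeriv (i+1) f x * iteratedDeriv (n+1-(i+1)) g x
          = (n.choose i : ℝ) * iteratedDeriv (i+1) f x * iteratedDeriv (n-i) g x
            + (n.choose (i+1) : ℝ) * iteratedDeriv (i+1) f x * iteratedDeriv (n-i) g x := by
        intro i _
        have h1 : (n+1).choose (i+1) = n.choose i + n.choose (i+1) := Nat.choose_succ_succ n i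
        have h2 : n+1-(i+1) = n-i := by omega
        rw [h1, h2]; push_cast; ring
      rw [Finset.sum_congr rfl e3, Finset.sum_add_distrib]
      simp only [Nat.choose_zero_right, Nat.cast_one, one_mul, Nat.sub_zero]
      ring
    rw [E1, E2, E3, E4]


lemma bellB_rec (k n : ℕ) :
    BellB (k+1) (n+1)
      = ∑ i ∈ range (n+1), (n.choose i : ℝ) * BellB k (i+1) * BellB (k+1) (n-i) := by
  have hdf : ContDiff ℝ (⊤ : ℕ∞) (deriv (expIter k)) :=
    (contDiff_infty_iff_deriv.mp (contDiff_expIter k)).2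
  have hg : ContDiff ℝ (⊤ : ℕ∞) (expIter (k+1)) := contDiff_expIter (k+1)
  have h0 : BellB (k+1) (n+1) = iteratedDeriv n
      (fun x => deriv (expIter k) x * expIter (k+1) x) 0 := by
    rw [BellB, iteratedDeriv_succ', deriv_expIter]
  rw [h0, iteratedDeriv_mul_apply n _ _ hdf hg 0]
  refine Finset.sum_congr rfl fun i _ => ?_
  rw [BellB, BellB, ← iteratedDeriv_succ']

lemma bellB_pos (k : ℕ) (hk : 1 ≤ k) : ∀ n, 0 < BellB k n := by
  induction k with
  | zero => omega
  | succ k ih =>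
    rcases Nat.eq_zero_or_pos k with hk0 | hk1
    · subst hk0
      intro n
      rw [bellB_one]
      norm_num
    · have hzk := ih hk1
      intro n
      induction n using Nat.strong_induction_on with
      | _ n IH =>
        match n with
        | 0 =>
          have : BellB (k+1) 0 = expIter (k+1) 0 := by rw [BellB, iteratedDeriv_zero]
          rw [this]
          exact expIter_succ_pos k 0
        | m+1 =>
          rw [bellB_rec]
          apply Finset.sum_pos
          · intro i hi
            have hle : i ≤ m := Nat.lt_succ_iff.mp (Finset.mem_range.mp hi)
            have h1 : (0:ℝ) < (m.choose i : ℝ) := by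
              exact_mod_cast Nat.choose_pos hle
            exact mul_pos (mul_pos h1 (hzk (i+1))) (IH (m-i) (by omega))
          · exact ⟨0, Finset.mem_range.mpr (by omega)⟩


/-- Key abstract lemma (Bender–Canfield style): if `z` is a positive log-concave
sequence with `z 0 = 1` and `c` satisfies `(m+1) * c m = ∑_{i ≤ m} z i * c (m-i)`
with `c` positive, then `c` is log-concave. -/
lemma abstract_logconcave (z c : ℕ → ℝ) (hz0 : z 0 = 1) (hzpos : ∀ j, 0 < z j)
    (hzlc : ∀ j, z j * z (j+2) ≤ z (j+1)^2)
    (hcpos : ∀ m, 0 < c m)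
    (hrec : ∀ m : ℕ, ((m:ℝ)+1) * c m = ∑ i ∈ range (m+1), z i * c (m - i)) :
    ∀ n, c n * c (n+2) ≤ c (n+1)^2 := by
  -- z-ratio is antitone (everywhere)
  have zq_anti : Antitone (fun j => z (j+1) / z j) := by
    apply antitone_nat_of_succ_le
    intro j
    rw [div_le_div_iff₀ (hzpos (j+1)) (hzpos j)]
    nlinarith [hzlc j]
  have hprod_z : ∀ a k, a ≤ k → z a * z (k+1) ≤ z (a+1) * z k := by
    intro a k h
    have := zq_anti h
    rw [div_le_div_iff₀ (hzpos k) (hzpos a)] at this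
    nlinarith [this]
  intro n
  induction n using Nat.strong_induction_on with
  | _ n IH =>
    -- c-ratio is antitone up to n
    have qstep : ∀ m, m < n → c (m+2) / c (m+1) ≤ c (m+1) / c m := by
      intro m hm
      rw [div_le_div_iff₀ (hcpos (m+1)) (hcpos m)]
      nlinarith [IH m hm]
    have qmono : ∀ a b, a ≤ b → b ≤ n → c (b+1) / c b ≤ c (a+1) / c a := by
      intro a b hab
      induction hab with
      | refl => intro _; exact le_rfl
      | @step m hm ihm =>
        intro hmn
        exact le_trans (qstep m (by omega)) (ihm (by omega))
    have hprod_c : ∀ α β, β ≤ α → α ≤ n → c β * c (α+1) ≤ c α * c (β+1) := by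
      intro α β hba han
      have := qmono β α hba han
      rw [div_le_div_iff₀ (hcpos α) (hcpos β)] at this
      nlinarith [this]
    -- the extended summand
    set cE : ℕ → ℝ := fun a => if a ≤ n then c (n - a) else 0 with hcE
    set f : ℕ → ℕ → ℝ :=
      fun a k => (z (a+1) * z k - z a * z (k+1)) * (cE a * c (n+1-k)) with hf
    have hcEnn : ∀ a, 0 ≤ cE a := by
      intro a
      by_cases h : a ≤ n <;> simp [hcE, h, (hcpos _).le]
    -- termwise positivity after symmetrization
    have key : ∀ a k, a ≤ n+1 → k ≤ n+1 → 0 ≤ f a k + f k a := by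
      intro a k ha hk
      have hform : f a k + f k a = (z (a+1) * z k - z a * z (k+1)) *
          (cE a * c (n+1-k) - cE k * c (n+1-a)) := by
        simp only [hf]
        ring
      rw [hform]
      have F_nonneg : ∀ a k : ℕ, a ≤ k → k ≤ n+1 →
          0 ≤ cE a * c (n+1-k) - cE k * c (n+1-a) := by
        intro a k hak hk
        by_cases hkn : k ≤ n
        · have han : a ≤ n := le_trans hak hkn
          have e1 : cE a = c (n-a) := by simp [hcE, han]
          have e2 : cE k = c (n-k) := by simp [hcE, hkn]
          have e3 : n+1-k = (n-k)+1 := by omega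
          have e4 : n+1-a = (n-a)+1 := by omega
          rw [e1, e2, e3, e4]
          have := hprod_c (n-a) (n-k) (by omega) (by omega)
          nlinarith [this]
        · have hk1 : k = n+1 := by omega
          have : cE k = 0 := by simp [hcE, hk1]
          rw [this]
          simp only [zero_mul, sub_zero]
          exact mul_nonneg (hcEnn a) (hcpos _).le
      rcases le_total a k with hak | hka
      · have hE : 0 ≤ z (a+1) * z k - z a * z (k+1) := by
          have := hprod_z a k hak
          linarith
        exact mul_nonneg hE (F_nonneg a k hak hk)
      · have hE : z (a+1) * z k - z a * z (k+1) ≤ 0 := by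
          have := hprod_z k a hka
          nlinarith [this]
        have hF : cE a * c (n+1-k) - cE k * c (n+1-a) ≤ 0 := by
          have := F_nonneg k a hka ha
          linarith
        nlinarith [hE, hF]
    -- nonnegativity of the double sum
    have hL_nonneg : 0 ≤ ∑ a ∈ range (n+2), ∑ k ∈ range (n+2), f a k := by
      have hswap : ∑ a ∈ range (n+2), ∑ k ∈ range (n+2), f a k
          = ∑ a ∈ range (n+2), ∑ k ∈ range (n+2), f k a := Finset.sum_comm
      have h2 : 0 ≤ ∑ a ∈ range (n+2), ∑ k ∈ range (n+2), (f a k + f k a) := by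
        apply Finset.sum_nonneg
        intro a ha
        apply Finset.sum_nonneg
        intro k hk
        have ha' := Finset.mem_range.mp ha
        have hk' := Finset.mem_range.mp hk
        exact key a k (by omega) (by omega)
      simp only [Finset.sum_add_distrib] at h2
      rw [← hswap] at h2
      linarith
    -- the identity: the double sum equals (n+1)(n+2) * (c(n+1)^2 - c n * c (n+2))
    have h3 : ∑ i ∈ range (n+2), z i * c (n+1-i) = ((n:ℝ)+2) * c (n+1) := by
      have := hrec (n+1)
      push_cast at this
      rw [← this]
      ring
    have h2' : ∑ i ∈ range (n+3), z i * c (n+2-i) = ((n:ℝ)+3) * c (n+2) := by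
      have := hrec (n+2)
      push_cast at this
      rw [← this]
      ring
    have h4 : ∑ a ∈ range (n+1), z a * c (n-a) = ((n:ℝ)+1) * c n := (hrec n).symm
    have h1 : ∑ a ∈ range (n+1), z (a+1) * c (n-a) = ((n:ℝ)+1) * c (n+1) := by
      have hs := Finset.sum_range_succ' (fun i => z i * c (n+1-i)) (n+1)
      rw [h3] at hs
      have e : ∀ a ∈ range (n+1), z (a+1) * c (n+1-(a+1)) = z (a+1) * c (n-a) := by
        intro a _
        congr 2
        omega
      rw [Finset.sum_congr rfl e] at hs
      rw [hz0] at hs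
      simp only [Nat.sub_zero] at hs
      linarith [hs]
    have h2'' : ∑ k ∈ range (n+2), z (k+1) * c (n+1-k) = ((n:ℝ)+2) * c (n+2) := by
      have hs := Finset.sum_range_succ' (fun i => z i * c (n+2-i)) (n+2)
      rw [h2'] at hs
      have e : ∀ a ∈ range (n+2), z (a+1) * c (n+2-(a+1)) = z (a+1) * c (n+1-a) := by
        intro a _
        congr 2
        omega
      rw [Finset.sum_congr rfl e] at hs
      rw [hz0] at hs
      simp only [Nat.sub_zero] at hs
      linarith [hs]
    have hL : ∑ a ∈ range (n+2), ∑ k ∈ range (n+2), f a k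
        = ((n:ℝ)+1) * ((n:ℝ)+2) * (c (n+1)^2 - c n * c (n+2)) := by
      -- drop the last (zero) row
      rw [Finset.sum_range_succ]
      have hrow : ∑ k ∈ range (n+2), f (n+1) k = 0 := by
        apply Finset.sum_eq_zero
        intro k _
        have : cE (n+1) = 0 := by simp [hcE]
        simp [hf, this]
      rw [hrow, add_zero]
      have hrowval : ∀ a ∈ range (n+1), ∑ k ∈ range (n+2), f a k
          = z (a+1) * c (n-a) * (((n:ℝ)+2) * c (n+1))
            - z a * c (n-a) * (((n:ℝ)+2) * c (n+2)) := by
        intro a ha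
        have han : a ≤ n := Nat.lt_succ_iff.mp (Finset.mem_range.mp ha)
        have e1 : cE a = c (n-a) := by simp [hcE, han]
        have : ∀ k ∈ range (n+2), f a k
            = z (a+1) * c (n-a) * (z k * c (n+1-k))
              - z a * c (n-a) * (z (k+1) * c (n+1-k)) := by
          intro k _
          simp only [hf, e1]
          ring
        rw [Finset.sum_congr rfl this, Finset.sum_sub_distrib, ← Finset.mul_sum, ← Finset.mul_sum,
          h3, h2'']
      rw [Finset.sum_congr rfl hrowval, Finset.sum_sub_distrib]
      have : ∀ a ∈ range (n+1), z (a+1) * c (n-a) * (((n:ℝ)+2) * c (n+1))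
          = (((n:ℝ)+2) * c (n+1)) * (z (a+1) * c (n-a)) := by
        intro a _; ring
      rw [Finset.sum_congr rfl this, ← Finset.mul_sum, h1]
      have : ∀ a ∈ range (n+1), z a * c (n-a) * (((n:ℝ)+2) * c (n+2))
          = (((n:ℝ)+2) * c (n+2)) * (z a * c (n-a)) := by
        intro a _; ring
      rw [Finset.sum_congr rfl this, ← Finset.mul_sum, h4]
      ring
    rw [hL] at hL_nonneg
    have hpos : (0:ℝ) < ((n:ℝ)+1) * ((n:ℝ)+2) := by positivity
    nlinarith [hL_nonneg, hpos, mul_pos hpos (hcpos (n+1))]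
noncomputable def Wseq (k : ℕ) : ℕ → ℝ
  | 0 => 1
  | m+1 => BellB k (m+1) / (m ! : ℝ)

lemma Wseq_zero (k : ℕ) : Wseq k 0 = 1 := rfl

lemma Wseq_succ (k m : ℕ) : Wseq k (m+1) = BellB k (m+1) / (m ! : ℝ) := rfl

lemma crec (k : ℕ) :
    ∀ m : ℕ, ((m:ℝ)+1) * (BellB (k+1) m / (m ! : ℝ))
      = ∑ i ∈ range (m+1), Wseq k i * (BellB (k+1) (m-i) / ((m-i)! : ℝ)) := by
  intro m
  cases m with
  | zero => simp [Wseq]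
  | succ m =>
    have hstep : ∑ i ∈ range (m+1), Wseq k (i+1) * (BellB (k+1) (m-i) / ((m-i)! : ℝ))
        = ((m:ℝ)+1) * (BellB (k+1) (m+1) / ((m+1)! : ℝ)) := by
      have hb := bellB_rec k m
      have hterm : ∀ i ∈ range (m+1),
          Wseq k (i+1) * (BellB (k+1) (m-i) / ((m-i)! : ℝ))
          = (m.choose i : ℝ) * BellB k (i+1) * BellB (k+1) (m-i) / (m ! : ℝ) := by
        intro i hi
        have hle : i ≤ m := Nat.lt_succ_iff.mp (Finset.mem_range.mp hi)
        have hfac : (m ! : ℝ) = (m.choose i : ℝ) * (i ! : ℝ) * ((m-i)! : ℝ) := by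
          exact_mod_cast (Nat.choose_mul_factorial_mul_factorial hle).symm
        have h1 : (i ! : ℝ) ≠ 0 := Nat.cast_ne_zero.mpr (Nat.factorial_ne_zero i)
        have h2 : ((m-i)! : ℝ) ≠ 0 := Nat.cast_ne_zero.mpr (Nat.factorial_ne_zero (m-i))
        have h3 : (m.choose i : ℝ) ≠ 0 := by
          exact_mod_cast (Nat.choose_pos hle).ne'
        rw [Wseq_succ, hfac]
        field_simp
      rw [Finset.sum_congr rfl hterm, ← Finset.sum_div, ← hb]
      have h4 : ((m+1)! : ℝ) = ((m:ℝ)+1) * (m ! : ℝ) := by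
        push_cast [Nat.factorial_succ]
        ring
      have h5 : (m ! : ℝ) ≠ 0 := Nat.cast_ne_zero.mpr (Nat.factorial_ne_zero m)
      rw [h4]
      field_simp
    rw [Finset.sum_range_succ' (fun i => Wseq k i * (BellB (k+1) (m+1-i) / ((m+1-i)! : ℝ))) (m+1)]
    have e : ∀ i ∈ range (m+1),
        Wseq k (i+1) * (BellB (k+1) (m+1-(i+1)) / ((m+1-(i+1))! : ℝ))
        = Wseq k (i+1) * (BellB (k+1) (m-i) / ((m-i)! : ℝ)) := by
      intro i _
      have : m+1-(i+1) = m-i := by omega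
      rw [this]
    rw [Finset.sum_congr rfl e, hstep, Wseq_zero]
    simp only [Nat.sub_zero, one_mul]
    push_cast
    ring

lemma Wseq_pos (k : ℕ) (hk : 1 ≤ k) : ∀ j, 0 < Wseq k j := by
  intro j
  cases j with
  | zero => norm_num [Wseq_zero]
  | succ m =>
    rw [Wseq_succ]
    exact div_pos (bellB_pos k hk (m+1)) (by exact_mod_cast Nat.factorial_pos m)

lemma Wseq_logconcave : ∀ k, 1 ≤ k → ∀ n, Wseq k n * Wseq k (n+2) ≤ Wseq k (n+1)^2 := by
  intro k hk
  induction k with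
  | zero => omega
  | succ k ih =>
    rcases Nat.eq_zero_or_pos k with hk0 | hk1
    · -- base case k+1 = 1
      subst hk0
      intro n
      cases n with
      | zero =>
        simp [Wseq_zero, Wseq_succ, bellB_one]
      | succ m =>
        rw [Wseq_succ, Wseq_succ, Wseq_succ, bellB_one, bellB_one, bellB_one]
        have h : (((m+1)! : ℝ))^2 ≤ (m ! : ℝ) * ((m+2)! : ℝ) := by
          have h1 : (0:ℝ) < (m ! : ℝ) := by exact_mod_cast Nat.factorial_pos m
          push_cast [Nat.factorial_succ]
          nlinarith [h1, (Nat.cast_nonneg m : (0:ℝ) ≤ (m:ℝ))]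
        rw [div_mul_div_comm, one_mul, div_pow, one_pow]
        rw [div_le_div_iff₀ (by positivity) (by positivity)]
        nlinarith [h]
    · -- inductive step
      have hzlc := ih hk1
      set c : ℕ → ℝ := fun m => BellB (k+1) m / (m ! : ℝ) with hc
      have hcpos : ∀ m, 0 < c m := by
        intro m
        exact div_pos (bellB_pos (k+1) (by omega) m) (by exact_mod_cast Nat.factorial_pos m)
      have hrec : ∀ m : ℕ, ((m:ℝ)+1) * c m = ∑ i ∈ range (m+1), Wseq k i * c (m-i) := crec k
      have habs := abstract_logconcave (Wseq k) c (Wseq_zero k) (Wseq_pos k hk1) hzlc hcpos hrec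
      have hWc : ∀ m : ℕ, Wseq (k+1) (m+1) = ((m:ℝ)+1) * c (m+1) := by
        intro m
        rw [Wseq_succ]
        show BellB (k+1) (m+1) / (m ! : ℝ) = ((m:ℝ)+1) * (BellB (k+1) (m+1) / ((m+1)! : ℝ))
        have h4 : ((m+1)! : ℝ) = ((m:ℝ)+1) * (m ! : ℝ) := by
          push_cast [Nat.factorial_succ]; ring
        have h5 : (m ! : ℝ) ≠ 0 := Nat.cast_ne_zero.mpr (Nat.factorial_ne_zero m)
        rw [h4]
        field_simp
      intro n
      cases n with
      | zero =>
        -- need : Wseq (k+1) 0 * Wseq (k+1) 2 ≤ (Wseq (k+1) 1)^2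
        have hc1 : c 1 = Wseq k 1 * c 0 := by
          have := hrec 1
          rw [Finset.sum_range_succ, Finset.sum_range_succ] at this
          simp only [Finset.sum_empty, Wseq_zero, Nat.cast_one] at this
          norm_num at this
          linarith [this]
        have h2c2 : 2 * c 2 = Wseq k 1 * c 1 + Wseq k 2 * c 0 := by
          have := hrec 2
          rw [Finset.sum_range_succ, Finset.sum_range_succ, Finset.sum_range_succ] at this
          simp only [Finset.sum_empty, Wseq_zero] at this
          norm_num at this
          linarith [this]
        have hz2 : Wseq k 2 ≤ Wseq k 1 ^ 2 := by
          have := hzlc 0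
          rw [Wseq_zero] at this
          linarith [this]
        have hc0ge : (2:ℝ) ≤ c 0 := by
          obtain ⟨k0, rfl⟩ : ∃ k0, k = k0+1 := ⟨k-1, by omega⟩
          have : c 0 = expIter (k0+2) 0 := by
            rw [hc]
            simp [BellB, iteratedDeriv_zero]
          rw [this]
          exact two_le_expIter k0
        rw [Wseq_zero, hWc 1, hWc 0]
        push_cast
        have hz1 := Wseq_pos k hk1 1
        have hc0 := hcpos 0
        have hz1c1 : Wseq k 1 * c 1 = Wseq k 1 ^ 2 * c 0 := by rw [hc1]; ring
        have hc1sq : c 1 ^ 2 = Wseq k 1 ^ 2 * c 0 ^ 2 := by rw [hc1]; ring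
        have hA : Wseq k 2 * c 0 ≤ Wseq k 1 ^ 2 * c 0 :=
          mul_le_mul_of_nonneg_right hz2 hc0.le
        have hB : Wseq k 1 ^ 2 * c 0 * 2 ≤ Wseq k 1 ^ 2 * c 0 * c 0 :=
          mul_le_mul_of_nonneg_left hc0ge (by positivity)
        nlinarith [h2c2, hz1c1, hc1sq, hA, hB]
      | succ m =>
        rw [hWc m, hWc (m+1), hWc (m+2)]
        push_cast
        have h1 := habs (m+1)
        have h2 := hcpos (m+1)
        have h3 := hcpos (m+3)
        have h4 := hcpos (m+2)
        have hm : (0:ℝ) ≤ (m:ℝ) := Nat.cast_nonneg m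
        nlinarith [mul_le_mul_of_nonneg_left h1
            (by nlinarith : (0:ℝ) ≤ ((m:ℝ)+1) * ((m:ℝ)+3)),
          sq_nonneg (c (m+2)), h1, h2, h3, h4, hm]

/-- The Bell numbers of order `k`: `bellOrd k n = BellB k n / expIter k 0`. -/
noncomputable def bellOrd (k n : ℕ) : ℝ := BellB k n / expIter k 0

/-- For every integer `k ≥ 2`, the sequence `Z` with `Z 0 = 1` and
`Z n = expIter k 0 * bellOrd k n / (n-1)! = BellB k n / (n-1)!` for `n ≥ 1`
is log-concave. -/
theorem BellB_shift_log_concave (k : ℕ) (hk : 2 ≤ k)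
    (Z : ℕ → ℝ) (hZ0 : Z 0 = 1)
    (hZ : ∀ n, 1 ≤ n →
      Z n = expIter k 0 * bellOrd k n / (((n - 1)! : ℕ) : ℝ) ∧
        Z n = BellB k n / (((n - 1)! : ℕ) : ℝ)) :
    ∀ n, Z n * Z (n + 2) ≤ Z (n + 1) ^ 2 := by
  have hZW : ∀ m, Z m = Wseq k m := by
    intro m
    cases m with
    | zero => rw [hZ0, Wseq_zero]
    | succ m =>
      have h := (hZ (m+1) (by omega)).2
      have he : (m+1) - 1 = m := by omega
      rw [h, he, Wseq_succ]
  intro n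
  rw [hZW n, hZW (n+2), hZW (n+1)]
  exact Wseq_logconcave k (by omega) n
end
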